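/- For any f ∈ ℍ[z] and any γ ∈ [α] (a non-real conjugacy class), the left evaluation of f at γ can be recovered from the left evaluations at α and \bar{α} via f^{eℓ}(γ) = (γ−\bar{γ})⁻¹[(γ−\bar{α}) f^{eℓ}(α) + (γ−α) f^{eℓ}(\bar{α})]. -/

import Mathlib

open Polynomial

/-- Left evaluation of a quaternion polynomial: `f^{eℓ}(α) = Σ α^j f_j`. -/
noncomputable def levalQ (α : Quaternion ℝ) (f : Polynomial (Quaternion ℝ)) : Quaternion ℝ :=
  f.sum fun j a => α ^ j * a

namespace Stmt8Aux

open Quaternion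

lemma re_mul_comm (a b : Quaternion ℝ) : (a * b).re = (b * a).re := by
  simp only [Quaternion.re_mul]; ring

lemma sq_eq (x : Quaternion ℝ) :
    x ^ 2 = x * ((2 * x.re : ℝ) : Quaternion ℝ) - ((Quaternion.normSq x : ℝ) : Quaternion ℝ) := by
  have h := Quaternion.self_mul_star x
  rw [Quaternion.star_eq_two_re_sub] at h
  rw [mul_sub] at h
  rw [sq]
  linear_combination (norm := noncomm_ring) -h

lemma pow_rec (x : Quaternion ℝ) (j : ℕ) :
    x ^ (j + 2) = x ^ (j + 1) * ((2 * x.re : ℝ) : Quaternion ℝ)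
      - x ^ j * ((Quaternion.normSq x : ℝ) : Quaternion ℝ) := by
  rw [pow_add, sq_eq, mul_sub, ← mul_assoc, ← pow_succ]

lemma key (α γ : Quaternion ℝ) (hre : γ.re = α.re)
    (hns : Quaternion.normSq γ = Quaternion.normSq α) (j : ℕ) :
    (γ - star γ) * γ ^ j = (γ - star α) * α ^ j + (γ - α) * (star α) ^ j := by
  induction j using Nat.twoStepInduction with
  | zero =>
    simp only [pow_zero, mul_one]
    rw [Quaternion.star_eq_two_re_sub, Quaternion.star_eq_two_re_sub, hre]
    abel
  | one =>
    simp only [pow_one]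
    have hγ2 := sq_eq γ
    have hα2 := sq_eq α
    rw [sq] at hγ2 hα2
    rw [Quaternion.star_eq_two_re_sub γ, Quaternion.star_eq_two_re_sub α, hre]
    have hc : ∀ r : ℝ, ∀ a : Quaternion ℝ, (r : Quaternion ℝ) * a = a * r :=
      fun r a => Quaternion.coe_commutes r a
    rw [hns, hre] at hγ2
    linear_combination (norm := noncomm_ring)
      2 * hγ2 - 2 * hα2 - (hc (2 * α.re) γ) + (hc (2 * α.re) α)
  | more j ih2 ih1 =>
    rw [pow_rec γ, pow_rec α, pow_rec (star α), Quaternion.re_star, Quaternion.normSq_star,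
      hre, hns]
    rw [mul_sub, mul_sub, mul_sub, ← mul_assoc, ← mul_assoc, ← mul_assoc, ← mul_assoc,
      ← mul_assoc, ← mul_assoc, ih1, ih2]
    noncomm_ring

end Stmt8Aux

/-- Interpolation formula for left evaluation on a conjugacy class. -/
theorem stmt8 (α : Quaternion ℝ) (hα : α.im ≠ 0) (f : Polynomial (Quaternion ℝ))
    (γ : Quaternion ℝ) (hγ : ∃ h : Quaternion ℝ, h ≠ 0 ∧ γ = h⁻¹ * α * h) :
    levalQ γ f = (γ - star γ)⁻¹ *
      ((γ - star α) * levalQ α f + (γ - α) * levalQ (star α) f) := by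
  obtain ⟨h, h0, hγeq⟩ := hγ
  have hre : γ.re = α.re := by
    rw [hγeq, mul_assoc, Stmt8Aux.re_mul_comm, mul_assoc, mul_inv_cancel₀ h0, mul_one]
  have hns : Quaternion.normSq γ = Quaternion.normSq α := by
    have hcomm : h * γ = α * h := by
      rw [hγeq, ← mul_assoc, ← mul_assoc, mul_inv_cancel₀ h0, one_mul]
    have := congrArg Quaternion.normSq hcomm
    rw [map_mul, map_mul] at this
    have hns0 : Quaternion.normSq h ≠ 0 := Quaternion.normSq_ne_zero.2 h0
    apply mul_left_cancel₀ hns0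
    rw [this, mul_comm]
  have hne : γ - star γ ≠ 0 := by
    intro hz
    have hsg : star γ = γ := (sub_eq_zero.1 hz).symm
    have hγre : γ = (γ.re : Quaternion ℝ) := Quaternion.star_eq_self.1 hsg
    have h1 : Quaternion.normSq γ = γ.re ^ 2 := by
      rw [hγre, Quaternion.normSq_coe]; simp
    rw [hns, hre] at h1
    rw [Quaternion.normSq_def'] at h1
    apply hα
    have h2 : α.imI = 0 ∧ α.imJ = 0 ∧ α.imK = 0 := by
      refine ⟨?_, ?_, ?_⟩ <;> nlinarith [sq_nonneg α.imI, sq_nonneg α.imJ, sq_nonneg α.imK]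
    ext <;> simp [h2.1, h2.2.1, h2.2.2] <;> rfl
  have hkey := Stmt8Aux.key α γ hre hns
  have expand : (γ - star γ) * levalQ γ f
      = (γ - star α) * levalQ α f + (γ - α) * levalQ (star α) f := by
    unfold levalQ Polynomial.sum
    rw [Finset.mul_sum, Finset.mul_sum, Finset.mul_sum, ← Finset.sum_add_distrib]
    refine Finset.sum_congr rfl fun j _ => ?_
    rw [← mul_assoc, ← mul_assoc, ← mul_assoc, hkey j, add_mul]
  rw [← expand, inv_mul_cancel_left₀ hne]
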